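/- The sequence 0 → L → R_L →(∂) R_L →(Res) L → 0 is exact, where the first map is the inclusion of constants. That is: (1) the kernel of ∂ on R_L is exactly the set of constant series L·1; (2) the image of ∂ equals the kernel of Res, i.e. an element f ∈ R_L can be written f = ∂h with h ∈ R_L if and only if Res(f) = 0; (3) Res : R_L → L is surjective. -/

import Mathlib

set_option linter.unusedSectionVars false
open Finset

/-- Convergence of the series `∑ f i` to `a`, with respect to the valuation `v`
(in an ultrametric field, via the partial sums). -/
def HasVSum {L : Type*} [Field L] (v : L → EReal) (f : ℕ → L) (a : L) : Prop :=
  ∀ M : ℝ, ∃ N : ℕ, ∀ n ≥ N, (M : EReal) ≤ v ((∑ i ∈ Finset.range n, f i) - a)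

/-- A Laurent coefficient family `f : ℤ → L` belongs to the Robba ring `R_L`: there is `r > 0`
such that for every `t ∈ (0, r]`, `v (f n) + n t → ∞` as `|n| → ∞`. -/
def IsRobba {L : Type*} [Field L] (v : L → EReal) (f : ℤ → L) : Prop :=
  ∃ r : ℝ, 0 < r ∧ ∀ t : ℝ, 0 < t → t ≤ r → ∀ M : ℝ, ∃ N : ℕ, ∀ n : ℤ,
    (N : ℤ) ≤ |n| → (M : EReal) ≤ v (f n) + (((n : ℝ) * t : ℝ) : EReal)

/-- `b = ∂ f = (g')⁻¹ · (df/du)`, where `gderInv` is the coefficient family of `(g')⁻¹`: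
coefficientwise, `b n` is the (convergent) Cauchy product
`∑_{i ≥ 0} (g')⁻¹_i · (n - i + 1) f_{n - i + 1}`. -/
def IsDer {L : Type*} [Field L] (v : L → EReal) (gderInv : ℕ → L) (f b : ℤ → L) : Prop :=
  ∀ n : ℤ, HasVSum v
    (fun i : ℕ => gderInv i * (((n - (i : ℤ) + 1 : ℤ) : L) * f (n - (i : ℤ) + 1))) (b n)

/-- `Res f = ρ`: the coefficient of `u⁻¹` in `g' · f` is `ρ`, where `gder` is the coefficient
family of `g'`. -/
def HasRes {L : Type*} [Field L] (v : L → EReal) (gder : ℕ → L) (f : ℤ → L) (ρ : L) : Prop :=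
  HasVSum v (fun i : ℕ => gder i * f (-1 - (i : ℤ))) ρ



lemma ereal_tricho (a : EReal) : a = ⊥ ∨ (∃ x : ℝ, a = (x : EReal)) ∨ a = ⊤ := by
  induction a using EReal.rec with
  | bot => exact Or.inl rfl
  | coe x => exact Or.inr (Or.inl ⟨x, rfl⟩)
  | top => exact Or.inr (Or.inr rfl)

lemma tri_sum {M : Type*} [AddCommMonoid M] (n : ℕ) (F : ℕ → ℕ → M) :
    ∑ j ∈ range n, ∑ i ∈ range (n - j), F j i
      = ∑ k ∈ range n, ∑ j ∈ range (k + 1), F j (k - j) := by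
  induction n with
  | zero => simp
  | succ n ih =>
      rw [Finset.sum_range_succ (fun k => ∑ j ∈ range (k+1), F j (k - j)), ← ih]
      rw [Finset.sum_range_succ (fun j => ∑ i ∈ range (n + 1 - j), F j i)]
      have h1 : ∀ j ∈ range n, ∑ i ∈ range (n + 1 - j), F j i
          = (∑ i ∈ range (n - j), F j i) + F j (n - j) := by
        intro j hj
        rw [Finset.mem_range] at hj
        have : n + 1 - j = (n - j) + 1 := by omega
        rw [this, Finset.sum_range_succ]
      rw [Finset.sum_congr rfl h1, Finset.sum_add_distrib]
      have h2 : n + 1 - n = 1 := by omega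
      rw [h2, Finset.sum_range_one]
      rw [Finset.sum_range_succ (fun j => F j (n - j))]
      have h3 : n - n = 0 := by omega
      rw [h3]
      abel


lemma ereal_le_sub {x : EReal} {M c : ℝ} (h : (M:EReal) ≤ x + (c:EReal)) :
    ((M - c : ℝ) : EReal) ≤ x := by
  rcases ereal_tricho x with hb | ⟨y, hy⟩ | ht
  · exfalso; rw [hb] at h; simp at h
  · rw [hy] at h ⊢
    rw [← EReal.coe_add] at h
    have hr : M ≤ y + c := by exact_mod_cast h
    exact EReal.coe_le_coe_iff.mpr (by linarith)
  · rw [ht]; exact le_top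

lemma ereal_add_bound {x : EReal} {a b c M : ℝ} (hx : ((c : ℝ) : EReal) ≤ x)
    (h : M ≤ a + c + b) : (M : EReal) ≤ (a : EReal) + x + (b : EReal) := by
  calc (M : EReal) ≤ ((a + c + b : ℝ) : EReal) := EReal.coe_le_coe_iff.mpr h
  _ = (a : EReal) + (c : EReal) + (b : EReal) := by rw [EReal.coe_add, EReal.coe_add]
  _ ≤ (a : EReal) + x + (b : EReal) :=
      add_le_add_left (add_le_add_right hx _) _

lemma exists_real_lb {ι : Type*} (s : Finset ι) (g : ι → EReal) (hg : ∀ i ∈ s, g i ≠ ⊥) :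
    ∃ B : ℝ, ∀ i ∈ s, (B : EReal) ≤ g i := by
  induction s using Finset.cons_induction with
  | empty => exact ⟨0, by simp⟩
  | cons i s his ih =>
      obtain ⟨B, hB⟩ := ih (fun j hj => hg j (Finset.mem_cons_of_mem hj))
      rcases ereal_tricho (g i) with hb | ⟨x, hx⟩ | ht
      · exact absurd hb (hg i (Finset.mem_cons_self i s))
      · refine ⟨min B x, fun j hj => ?_⟩
        rcases Finset.mem_cons.mp hj with rfl | hj
        · rw [hx]; exact EReal.coe_le_coe_iff.mpr (min_le_right _ _)
        · exact le_trans (EReal.coe_le_coe_iff.mpr (min_le_left _ _)) (hB j hj)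
      · refine ⟨B, fun j hj => ?_⟩
        rcases Finset.mem_cons.mp hj with rfl | hj
        · rw [ht]; exact le_top
        · exact hB j hj

lemma padic_small (p : ℕ) (hp : p.Prime) (t : ℝ) (ht : 0 < t) :
    ∃ N : ℕ, ∀ n : ℕ, N ≤ n → (padicValNat p n : ℝ) ≤ t * n := by
  have hlog2 : (0:ℝ) < Real.log 2 := Real.log_pos (by norm_num)
  set C : ℝ := 2 / (t * Real.log 2) with hC
  have hC0 : 0 < C := by positivity
  refine ⟨⌈C^2⌉₊ + 1, fun n hn => ?_⟩
  have hn1 : 1 ≤ n := by omega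
  have hn0 : (0:ℝ) < (n:ℝ) := by exact_mod_cast hn1
  set V : ℕ := padicValNat p n with hV
  have h2V : (2:ℕ)^V ≤ n := by
    calc (2:ℕ)^V ≤ p^V := Nat.pow_le_pow_left hp.two_le V
    _ ≤ n := Nat.le_of_dvd (by omega) pow_padicValNat_dvd
  have h2VR : (2:ℝ)^V ≤ (n:ℝ) := by exact_mod_cast h2V
  have hlogn : (V:ℝ) * Real.log 2 ≤ Real.log n := by
    calc (V:ℝ) * Real.log 2 = Real.log ((2:ℝ)^V) := by rw [Real.log_pow]
    _ ≤ Real.log n := Real.log_le_log (by positivity) h2VR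
  have hsqrt : Real.log n ≤ 2 * Real.sqrt n := by
    have h1 : Real.log n = 2 * Real.log (Real.sqrt n) := by
      rw [Real.log_sqrt (le_of_lt hn0)]; ring
    have h2 : Real.log (Real.sqrt n) ≤ Real.sqrt n - 1 :=
      Real.log_le_sub_one_of_pos (Real.sqrt_pos.mpr hn0)
    nlinarith [Real.sqrt_nonneg (n:ℝ)]
  have hCn : C ≤ Real.sqrt n := by
    have h1 : C^2 ≤ (n:ℝ) := by
      calc C^2 ≤ (⌈C^2⌉₊ : ℝ) := Nat.le_ceil _
      _ ≤ n := by exact_mod_cast (by omega : ⌈C^2⌉₊ ≤ n)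
    calc C = Real.sqrt (C^2) := (Real.sqrt_sq hC0.le).symm
    _ ≤ Real.sqrt n := Real.sqrt_le_sqrt h1
  have hC2 : C * (t * Real.log 2) = 2 := by
    rw [hC]; field_simp
  have hsq : Real.sqrt (n:ℝ) * Real.sqrt (n:ℝ) = (n:ℝ) := Real.mul_self_sqrt hn0.le
  have h3 : C * Real.sqrt n ≤ (n:ℝ) := by
    nlinarith [mul_le_mul_of_nonneg_right hCn (Real.sqrt_nonneg (n:ℝ))]
  have h4 : (V:ℝ) * Real.log 2 ≤ (t * (n:ℝ)) * Real.log 2 := by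
    calc (V:ℝ) * Real.log 2 ≤ 2 * Real.sqrt n := le_trans hlogn hsqrt
    _ = (C * (t * Real.log 2)) * Real.sqrt n := by rw [hC2]
    _ = (t * Real.log 2) * (C * Real.sqrt n) := by ring
    _ ≤ (t * Real.log 2) * (n:ℝ) := by nlinarith [mul_pos ht hlog2]
    _ = (t * (n:ℝ)) * Real.log 2 := by ring
  exact le_of_mul_le_mul_right h4 hlog2

section Aux
variable {L : Type*} [Field L] (v : L → EReal)
variable (hv0 : v 0 = ⊤) (hv1 : v 1 = 0)
  (hvmul : ∀ x y : L, v (x * y) = v x + v y)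
  (hvadd : ∀ x y : L, min (v x) (v y) ≤ v (x + y))

include hv0 hv1 hvmul hvadd

lemma vneg (x : L) : v (-x) = v x := by
  have hm1 : v (-1 : L) = 0 := by
    have h := hvmul (-1) (-1)
    rw [neg_one_mul, neg_neg, hv1] at h
    rcases ereal_tricho (v (-1 : L)) with hb | ⟨y, hy⟩ | ht
    · rw [hb] at h; simp at h
    · rw [hy] at h ⊢
      rw [← EReal.coe_add] at h
      have : y + y = 0 := by exact_mod_cast h.symm
      have : y = 0 := by linarith
      simp [this]
    · rw [ht] at h; simp at h
  have := hvmul (-1) x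
  rw [neg_one_mul, hm1, zero_add] at this
  exact this

lemma vsub_comm (x y : L) : v (x - y) = v (y - x) := by
  rw [← vneg v hv0 hv1 hvmul hvadd (y - x), neg_sub]

lemma vsub_ge (x y : L) : min (v x) (v y) ≤ v (x - y) := by
  have h := hvadd x (-y)
  rw [vneg v hv0 hv1 hvmul hvadd] at h
  rwa [sub_eq_add_neg]

omit hv1 hvmul in
lemma vsum_ge {ι : Type*} (s : Finset ι) (f : ι → L) (M : EReal)
    (h : ∀ i ∈ s, M ≤ v (f i)) : M ≤ v (∑ i ∈ s, f i) := by
  induction s using Finset.cons_induction with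
  | empty => simp [hv0]
  | cons i s his ih =>
      rw [Finset.sum_cons]
      refine le_trans ?_ (hvadd _ _)
      exact le_min (h i (Finset.mem_cons_self i s))
        (ih fun j hj => h j (Finset.mem_cons_of_mem hj))

lemma vne_bot (x : L) : v x ≠ ⊥ := by
  rcases eq_or_ne x 0 with rfl | hx
  · rw [hv0]; simp
  · intro hb
    have h := hvmul x x⁻¹
    rw [mul_inv_cancel₀ hx, hv1, hb, EReal.bot_add] at h
    simp at h

lemma v_eq_zero_of_forall (x : L) (h : ∀ M : ℝ, (M : EReal) ≤ v x) : x = 0 := by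
  by_contra hx
  have hmul := hvmul x x⁻¹
  rw [mul_inv_cancel₀ hx, hv1] at hmul
  have htop : v x = ⊤ := by
    rcases ereal_tricho (v x) with hb | ⟨y, hy⟩ | ht
    · exact absurd hb (vne_bot v hv0 hv1 hvmul hvadd x)
    · have := h (y + 1)
      rw [hy, EReal.coe_le_coe_iff] at this
      linarith
    · exact ht
  rw [htop] at hmul
  rcases ereal_tricho (v x⁻¹) with hb | ⟨y, hy⟩ | ht
  · rw [hb] at hmul; simp at hmul
  · rw [hy] at hmul; simp [EReal.top_add_coe] at hmul
  · rw [ht] at hmul; simp at hmul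

lemma vinv_real (x : L) (a : ℝ) (hx : v x = (a : EReal)) : v x⁻¹ = ((-a : ℝ) : EReal) := by
  have hx0 : x ≠ 0 := by intro h; rw [h, hv0] at hx; exact absurd hx.symm (by simp)
  have h := hvmul x x⁻¹
  rw [mul_inv_cancel₀ hx0, hv1, hx] at h
  rcases ereal_tricho (v x⁻¹) with hb | ⟨y, hy⟩ | ht
  · rw [hb] at h; simp at h
  · rw [hy] at h ⊢
    rw [← EReal.coe_add] at h
    have : a + y = 0 := by exact_mod_cast h.symm
    have : y = -a := by linarith
    rw [this]
  · rw [ht] at h; simp [EReal.coe_add_top] at h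

omit hv0 hv1 hvmul hvadd in
lemma hasVSum_congr {f g : ℕ → L} {a b : L} (hfg : ∀ i, f i = g i) (hab : a = b)
    (h : HasVSum v f a) : HasVSum v g b := by
  have : f = g := funext hfg
  rwa [← this, ← hab]

omit hv1 hvmul hvadd in
lemma hasVSum_zero (f : ℕ → L) (hf : ∀ i, f i = 0) : HasVSum v f 0 := by
  intro M
  refine ⟨0, fun n _ => ?_⟩
  have : ∑ i ∈ range n, f i = 0 := Finset.sum_eq_zero fun i _ => hf i
  rw [this, sub_zero, hv0]
  exact le_top

lemma hasVSum_unique {f : ℕ → L} {a b : L} (ha : HasVSum v f a) (hb : HasVSum v f b) :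
    a = b := by
  have : a - b = 0 := by
    apply v_eq_zero_of_forall v hv0 hv1 hvmul hvadd
    intro M
    obtain ⟨Na, hNa⟩ := ha M
    obtain ⟨Nb, hNb⟩ := hb M
    set P := ∑ i ∈ range (max Na Nb), f i
    have h1 := hNa (max Na Nb) (le_max_left _ _)
    have h2 := hNb (max Na Nb) (le_max_right _ _)
    have : a - b = (P - b) - (P - a) := by ring
    rw [this]
    refine le_trans (le_min h2 h1) (vsub_ge v hv0 hv1 hvmul hvadd _ _)
  exact sub_eq_zero.mp this

lemma hasVSum_v_ge {f : ℕ → L} {a : L} {M : ℝ} (h : HasVSum v f a)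
    (hterm : ∀ i, (M : EReal) ≤ v (f i)) : (M : EReal) ≤ v a := by
  obtain ⟨N, hN⟩ := h M
  have hP : (M : EReal) ≤ v (∑ i ∈ range N, f i) :=
    vsum_ge v hv0 hvadd _ _ _ (fun i _ => hterm i)
  have : a = (∑ i ∈ range N, f i) - ((∑ i ∈ range N, f i) - a) := by ring
  rw [this]
  exact le_trans (le_min hP (hN N le_rfl)) (vsub_ge v hv0 hv1 hvmul hvadd _ _)

lemma exists_hasVSum (hcomplete : ∀ x : ℕ → L,
      (∀ M : ℝ, ∃ N : ℕ, ∀ m ≥ N, ∀ k ≥ N, (M : EReal) ≤ v (x m - x k)) →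
      ∃ a : L, ∀ M : ℝ, ∃ N : ℕ, ∀ k ≥ N, (M : EReal) ≤ v (x k - a))
    (f : ℕ → L) (hf : ∀ M : ℝ, ∃ N : ℕ, ∀ i ≥ N, (M : EReal) ≤ v (f i)) :
    ∃ a : L, HasVSum v f a := by
  have hc : ∀ M : ℝ, ∃ N : ℕ, ∀ m ≥ N, ∀ k ≥ N,
      (M : EReal) ≤ v ((∑ i ∈ range m, f i) - (∑ i ∈ range k, f i)) := by
    intro M
    obtain ⟨N, hN⟩ := hf M
    refine ⟨N, fun m hm k hk => ?_⟩
    rcases le_total k m with hkm | hmk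
    · rw [← Finset.sum_Ico_eq_sub _ hkm]
      exact vsum_ge v hv0 hvadd _ _ _ (fun i hi => hN i (le_trans hk (Finset.mem_Ico.mp hi).1))
    · rw [vsub_comm v hv0 hv1 hvmul hvadd, ← Finset.sum_Ico_eq_sub _ hmk]
      exact vsum_ge v hv0 hvadd _ _ _ (fun i hi => hN i (le_trans hm (Finset.mem_Ico.mp hi).1))
  obtain ⟨a, ha⟩ := hcomplete (fun n => ∑ i ∈ range n, f i) hc
  exact ⟨a, fun M => ha M⟩

omit hv1 hvmul in
lemma vmul_ge_right (x y : L) (hx : (0:EReal) ≤ v x) (hvmul : ∀ x y : L, v (x * y) = v x + v y)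
    {M : EReal} (hy : M ≤ v y) : M ≤ v (x * y) := by
  rw [hvmul]
  calc M ≤ v y := hy
  _ = 0 + v y := (zero_add _).symm
  _ ≤ v x + v y := add_le_add_left hx _

lemma key_lemma
    (A B : ℕ → L) (hA : ∀ j, (0:EReal) ≤ v (A j)) (hB : ∀ i, (0:EReal) ≤ v (B i))
    (hAB : ∀ n : ℕ, ∑ i ∈ range (n+1), A i * B (n-i) = if n = 0 then 1 else 0)
    (c : ℤ → L) (hc : ∀ M : ℝ, ∃ N : ℕ, ∀ m : ℤ, m ≤ -(N:ℤ) → (M:EReal) ≤ v (c m))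
    (S : ℤ → L) (hS : ∀ k : ℤ, HasVSum v (fun i => B i * c (k - i)) (S k)) :
    ∀ m : ℤ, HasVSum v (fun j => A j * S (m - j)) (c m) := by
  intro m M
  obtain ⟨Nc, hNc⟩ := hc M
  set N₀ : ℕ := Nc + m.natAbs + 1 with hN₀def
  have hcm : ∀ m' : ℤ, m' ≤ m - N₀ → (M:EReal) ≤ v (c m') := by
    intro m' hm'
    apply hNc
    have h1 : m ≤ (m.natAbs : ℤ) := Int.le_natAbs
    omega
  have hPge : ∀ (k : ℤ), k ≤ m - N₀ → ∀ I : ℕ,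
      (M:EReal) ≤ v (∑ i ∈ range I, B i * c (k - i)) := by
    intro k hk I
    apply vsum_ge v hv0 hvadd
    intro i _
    exact vmul_ge_right v hv0 hvadd _ _ (hB i) hvmul (hcm _ (by omega))
  have hSge : ∀ (k : ℤ), k ≤ m - N₀ → (M:EReal) ≤ v (S k) := by
    intro k hk
    exact hasVSum_v_ge v hv0 hv1 hvmul hvadd (hS k)
      (fun i => vmul_ge_right v hv0 hvadd _ _ (hB i) hvmul (hcm _ (by omega)))
  set NN : ℕ := N₀ + (range N₀).sup (fun j => (hS (m - j) M).choose) + 1 with hNNdef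
  refine ⟨NN, fun n hn => ?_⟩
  have hn1 : 1 ≤ n := le_trans (by omega) hn
  -- exact identity
  have hid : ∑ j ∈ range n, A j * (∑ i ∈ range (n - j), B i * c (m - j - i)) = c m := by
    have e1 : ∑ j ∈ range n, A j * (∑ i ∈ range (n - j), B i * c (m - j - i))
        = ∑ j ∈ range n, ∑ i ∈ range (n - j), A j * (B i * c (m - j - i)) :=
      Finset.sum_congr rfl (fun j _ => Finset.mul_sum _ _ _)
    rw [e1, tri_sum n (fun j i => A j * (B i * c (m - j - i)))]
    have e2 : ∀ k ∈ range n, ∑ j ∈ range (k + 1), A j * (B (k - j) * c (m - j - (k - j : ℕ)))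
        = (if k = 0 then (1:L) else 0) * c (m - k) := by
      intro k _
      rw [← hAB k, Finset.sum_mul]
      apply Finset.sum_congr rfl
      intro j hj
      rw [Finset.mem_range] at hj
      have hjk : ((k - j : ℕ) : ℤ) = (k : ℤ) - j := by omega
      rw [hjk]
      have harg : m - j - ((k : ℤ) - j) = m - k := by ring
      rw [harg, mul_assoc]
    rw [Finset.sum_congr rfl e2]
    have e3 : ∀ k ∈ range n, (if k = 0 then (1:L) else 0) * c (m - k)
        = if k = 0 then c (m - k) else 0 := by
      intro k _; split <;> simp
    rw [Finset.sum_congr rfl e3, Finset.sum_ite_eq' (range n) 0 (fun k => c (m - k)),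
      if_pos (Finset.mem_range.mpr hn1)]
    norm_num
  have hdiff : (∑ j ∈ range n, A j * S (m - j)) - c m
      = ∑ j ∈ range n, A j * (S (m - j) - ∑ i ∈ range (n - j), B i * c (m - j - i)) := by
    conv_lhs => rw [← hid]
    rw [← Finset.sum_sub_distrib]
    exact Finset.sum_congr rfl (fun j _ => by ring)
  rw [hdiff]
  apply vsum_ge v hv0 hvadd
  intro j hj
  rw [Finset.mem_range] at hj
  apply vmul_ge_right v hv0 hvadd _ _ (hA j) hvmul
  rcases lt_or_ge j N₀ with hjN | hjN
  · -- small j: use convergence of the B-series at k = m - j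
    have hspec := (hS (m - j) M).choose_spec
    have hnj : (hS (m - j) M).choose ≤ n - j := by
      have hle : (hS (m - j) M).choose ≤ (range N₀).sup (fun j => (hS (m - j) M).choose) :=
        Finset.le_sup (s := range N₀) (f := fun j : ℕ => (hS (m - (j:ℤ)) M).choose) (Finset.mem_range.mpr hjN)
      omega
    have := hspec (n - j) hnj
    rw [vsub_comm v hv0 hv1 hvmul hvadd]
    exact this
  · -- large j: deep regime
    have hk : m - j ≤ m - N₀ := by omega
    refine le_trans (le_min (hSge _ hk) (hPge _ hk (n - j))) (vsub_ge v hv0 hv1 hvmul hvadd _ _)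

end Aux

set_option maxHeartbeats 1000000

/-- Let `L` be a (complete, characteristic-zero) field with a valuation `v`
extending the `p`-adic valuation (`v p = 1` on `ℕ`), and let `g'`, `(g')⁻¹ ∈ 1 + u O_L[[u]]` be
the derivative of the Lubin–Tate logarithm and its inverse (mutually inverse power series with
integral coefficients and constant term `1`).  Then the sequence
`0 → L → R_L --∂--> R_L --Res--> L → 0` is exact:
(1) the kernel of `∂` on `R_L` is exactly the constants;
(2) `f ∈ R_L` is of the form `∂ h`, `h ∈ R_L`, iff `Res f = 0`;
(3) `Res : R_L → L` is surjective. -/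
theorem stmt_12
    (L : Type*) [Field L] [CharZero L]
    (p : ℕ) (hp : p.Prime)
    (v : L → EReal)
    (hv0 : v 0 = ⊤) (hv1 : v 1 = 0)
    (hvmul : ∀ x y : L, v (x * y) = v x + v y)
    (hvadd : ∀ x y : L, min (v x) (v y) ≤ v (x + y))
    (hvnat : ∀ n : ℕ, n ≠ 0 → v ((n : L)) = ((padicValNat p n : ℝ) : EReal))
    (hcomplete : ∀ x : ℕ → L,
      (∀ M : ℝ, ∃ N : ℕ, ∀ m ≥ N, ∀ k ≥ N, (M : EReal) ≤ v (x m - x k)) →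
      ∃ a : L, ∀ M : ℝ, ∃ N : ℕ, ∀ k ≥ N, (M : EReal) ≤ v (x k - a))
    (gder gderInv : ℕ → L)
    (hgd0 : gder 0 = 1) (hgdi0 : gderInv 0 = 1)
    (hgdO : ∀ n : ℕ, (0 : EReal) ≤ v (gder n))
    (hgdiO : ∀ n : ℕ, (0 : EReal) ≤ v (gderInv n))
    (hconv : ∀ n : ℕ,
      ∑ i ∈ Finset.range (n + 1), gder i * gderInv (n - i) = if n = 0 then 1 else 0) :
    -- (1) the kernel of ∂ is exactly the constants
    (∀ f : ℤ → L, IsRobba v f →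
      (IsDer v gderInv f (fun _ => 0) ↔
        ∃ cc : L, f = fun n : ℤ => if n = 0 then cc else 0)) ∧
    -- (2) the image of ∂ equals the kernel of Res
    (∀ f : ℤ → L, IsRobba v f →
      ((∃ h : ℤ → L, IsRobba v h ∧ IsDer v gderInv h f) ↔ HasRes v gder f 0)) ∧
    -- (3) Res is surjective
    (∀ ρ : L, ∃ f : ℤ → L, IsRobba v f ∧ HasRes v gder f ρ) := by
  classical
  -- shorthand for section lemmas
  have Vneg := vneg v hv0 hv1 hvmul hvadd
  have Vuniq := fun {f : ℕ → L} {a b : L} => hasVSum_unique v hv0 hv1 hvmul hvadd (f := f) (a := a) (b := b)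
  -- reversed convolution identity
  have hconv' : ∀ n : ℕ, ∑ i ∈ Finset.range (n+1), gderInv i * gder (n - i)
      = if n = 0 then 1 else 0 := by
    intro n
    have hrefl := Finset.sum_range_reflect (fun i => gder i * gderInv (n - i)) (n+1)
    rw [← hconv n, ← hrefl]
    apply Finset.sum_congr rfl
    intro i hi
    rw [Finset.mem_range] at hi
    have h1 : n + 1 - 1 - i = n - i := by omega
    have h2 : n - (n - i) = i := by omega
    rw [h1, h2, mul_comm]
  -- tails of Robba series at -∞
  have hftail : ∀ (f : ℤ → L), IsRobba v f →
      ∀ M : ℝ, ∃ N : ℕ, ∀ m : ℤ, m ≤ -(N:ℤ) → (M:EReal) ≤ v (f m) := by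
    rintro f ⟨r, hr, hrf⟩ M
    obtain ⟨N, hN⟩ := hrf r hr le_rfl M
    refine ⟨N + 1, fun m hm => ?_⟩
    have habs : (N:ℤ) ≤ |m| := by rw [abs_of_nonpos (by omega)]; omega
    have h1 := hN m habs
    have h2 : v (f m) + (((m:ℝ) * r : ℝ) : EReal) ≤ v (f m) := by
      have hm0 : (m:ℝ) ≤ 0 := by exact_mod_cast (by omega : m ≤ 0)
      have hmr : ((m:ℝ) * r) ≤ 0 := mul_nonpos_of_nonpos_of_nonneg hm0 hr.le
      calc v (f m) + (((m:ℝ) * r : ℝ) : EReal) ≤ v (f m) + ((0:ℝ):EReal) :=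
            add_le_add_right (EReal.coe_le_coe_iff.mpr hmr) _
      _ = v (f m) := by rw [EReal.coe_zero, add_zero]
    exact le_trans h1 h2
  -- valuation of integer casts
  have hvint : ∀ m : ℤ, m ≠ 0 → v ((m:L)) = ((padicValNat p m.natAbs : ℝ) : EReal) := by
    intro m hm
    rcases lt_trichotomy m 0 with hneg | hz | hpos
    · obtain ⟨k, hk⟩ : ∃ k : ℕ, m = -(k:ℤ) := ⟨m.natAbs, by omega⟩
      subst hk
      have hk0 : k ≠ 0 := by omega
      have : (((-(k:ℤ)):ℤ):L) = -((k:ℕ):L) := by push_cast; ring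
      rw [this, Vneg, hvnat k hk0]
      congr 1
      simp
    · exact absurd hz hm
    · obtain ⟨k, hk⟩ : ∃ k : ℕ, m = (k:ℤ) := ⟨m.natAbs, by omega⟩
      subst hk
      have hk0 : k ≠ 0 := by omega
      have : (((k:ℤ)):L) = ((k:ℕ):L) := by push_cast; ring
      rw [this, hvnat k hk0]
      norm_num
  have hvint0 : ∀ m : ℤ, m ≠ 0 → (0:EReal) ≤ v ((m:L)) := by
    intro m hm
    rw [hvint m hm]
    exact_mod_cast (by positivity : (0:ℝ) ≤ (padicValNat p m.natAbs : ℝ))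
  refine ⟨?_, ?_, ?_⟩
  · -- PART 1
    intro f hf
    constructor
    · intro hder
      have hS : ∀ k : ℤ, HasVSum v (fun i : ℕ => gderInv i * (((k - i : ℤ):L) * f (k - i))) 0 := by
        intro k
        have h := hder (k - 1)
        refine hasVSum_congr v ?_ rfl h
        intro i
        have he : k - 1 - (i:ℤ) + 1 = k - i := by ring
        show gderInv i * (((k - 1 - (i:ℤ) + 1 : ℤ):L) * f (k - 1 - i + 1)) = _
        rw [he]
      have hctail : ∀ M : ℝ, ∃ N : ℕ, ∀ m : ℤ, m ≤ -(N:ℤ) →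
          (M:EReal) ≤ v (((m:ℤ):L) * f m) := by
        intro M
        obtain ⟨N, hN⟩ := hftail f hf M
        refine ⟨N + 1, fun m hm => ?_⟩
        exact vmul_ge_right v hv0 hvadd _ _ (hvint0 m (by omega)) hvmul (hN m (by omega))
      have hkey := key_lemma v hv0 hv1 hvmul hvadd gder gderInv hgdO hgdiO hconv
        (fun m => ((m:ℤ):L) * f m) hctail (fun _ => 0) hS
      have hc0 : ∀ m : ℤ, ((m:ℤ):L) * f m = 0 := by
        intro m
        have h1 := hkey m
        have h2 : HasVSum v (fun j : ℕ => gder j * (0:L)) 0 :=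
          hasVSum_zero v hv0 _ (fun i => mul_zero _)
        exact Vuniq h1 h2
      refine ⟨f 0, funext fun n => ?_⟩
      by_cases hn : n = 0
      · simp [hn]
      · have h1 := hc0 n
        have hn' : ((n:ℤ):L) ≠ 0 := Int.cast_ne_zero.mpr hn
        rcases mul_eq_zero.mp h1 with h | h
        · exact absurd h hn'
        · simp [hn, h]
    · rintro ⟨cc, rfl⟩
      intro n
      refine hasVSum_zero v hv0 _ (fun i => ?_)
      by_cases hni : n - (i:ℤ) + 1 = 0
      · rw [hni]; simp
      · simp [hni]
  · -- PART 2
    intro f hf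
    constructor
    · rintro ⟨hh, hhrob, hder⟩
      have hS : ∀ k : ℤ, HasVSum v (fun i : ℕ => gderInv i * (((k - i : ℤ):L) * hh (k - i)))
          (f (k - 1)) := by
        intro k
        have h := hder (k - 1)
        refine hasVSum_congr v ?_ rfl h
        intro i
        have he : k - 1 - (i:ℤ) + 1 = k - i := by ring
        show gderInv i * (((k - 1 - (i:ℤ) + 1 : ℤ):L) * hh (k - 1 - i + 1)) = _
        rw [he]
      have hctail : ∀ M : ℝ, ∃ N : ℕ, ∀ m : ℤ, m ≤ -(N:ℤ) →
          (M:EReal) ≤ v (((m:ℤ):L) * hh m) := by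
        intro M
        obtain ⟨N, hN⟩ := hftail hh hhrob M
        refine ⟨N + 1, fun m hm => ?_⟩
        exact vmul_ge_right v hv0 hvadd _ _ (hvint0 m (by omega)) hvmul (hN m (by omega))
      have hkey := key_lemma v hv0 hv1 hvmul hvadd gder gderInv hgdO hgdiO hconv
        (fun m => ((m:ℤ):L) * hh m) hctail (fun k => f (k - 1)) hS 0
      have hc00 : (((0:ℤ):L) * hh 0) = 0 := by simp
      unfold HasRes
      refine hasVSum_congr v ?_ hc00 hkey
      intro i
      show gder i * f ((0:ℤ) - i - 1) = gder i * f (-1 - i)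
      have he : (0:ℤ) - (i:ℤ) - 1 = -1 - i := by ring
      rw [he]
    · intro hres
      have hbex : ∀ n : ℤ, ∃ a : L, HasVSum v (fun i : ℕ => gder i * f (n - i)) a := by
        intro n
        apply exists_hasVSum v hv0 hv1 hvmul hvadd hcomplete
        intro M
        obtain ⟨N, hN⟩ := hftail f hf M
        refine ⟨n.natAbs + N, fun i hi => ?_⟩
        apply vmul_ge_right v hv0 hvadd _ _ (hgdO i) hvmul
        apply hN
        have h1 : n ≤ (n.natAbs : ℤ) := Int.le_natAbs
        omega
      choose b hb using hbex
      have hbm1 : b (-1) = 0 := by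
        have hres' : HasVSum v (fun i : ℕ => gder i * f (-1 - (i:ℤ))) 0 := hres
        exact Vuniq (hb (-1)) hres'
      set hh : ℤ → L := fun m => if m = 0 then 0 else ((m:L))⁻¹ * b (m - 1) with hhdef
      have hch : ∀ m : ℤ, ((m:ℤ):L) * hh m = b (m - 1) := by
        intro m
        by_cases hm : m = 0
        · subst hm
          show ((0:ℤ):L) * hh 0 = b (0 - 1)
          norm_num [hbm1]
        · show ((m:ℤ):L) * (if m = 0 then 0 else ((m:L))⁻¹ * b (m - 1)) = b (m - 1)
          rw [if_neg hm, ← mul_assoc, mul_inv_cancel₀ (Int.cast_ne_zero.mpr hm), one_mul]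
      have hvb : ∀ (n : ℤ) (X : ℝ), (∀ m' : ℤ, m' ≤ n → (X:EReal) ≤ v (f m')) →
          (X:EReal) ≤ v (b n) := by
        intro n X hX
        apply hasVSum_v_ge v hv0 hv1 hvmul hvadd (hb n)
        intro i
        exact vmul_ge_right v hv0 hvadd _ _ (hgdO i) hvmul (hX _ (by omega))
      refine ⟨hh, ?_, ?_⟩
      · -- IsRobba hh
        obtain ⟨r, hr, hrf⟩ := hf
        refine ⟨r/2, by positivity, ?_⟩
        intro t ht0 htr M
        obtain ⟨N₃, hN₃⟩ := hrf (t/2) (by positivity) (by linarith) M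
        obtain ⟨N₂, hN₂⟩ := hrf (2*t) (by positivity) (by linarith) M
        set N₀ : ℕ := max N₂ N₃ + 1 with hN0def
        obtain ⟨B₀, hB₀⟩ := exists_real_lb (Finset.Icc (-(N₀:ℤ)) (N₀:ℤ)) (fun m' => v (f m'))
          (fun m' _ => vne_bot v hv0 hv1 hvmul hvadd (f m'))
        obtain ⟨N₄, hN₄⟩ := padic_small p hp (t/2) (by positivity)
        set N₅ : ℕ := ⌈(2*(M - B₀))/t⌉₊ + 1 with hN5def
        set NN : ℕ := max (max (N₀+1) N₄) N₅ + 1 with hNNdef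
        have hNN1 : N₀ + 1 ≤ NN :=
          Nat.le_succ_of_le (le_trans (le_max_left _ _) (le_max_left _ _))
        have hNN2 : N₄ ≤ NN :=
          Nat.le_succ_of_le (le_trans (le_max_right _ _) (le_max_left _ _))
        have hNN3 : N₅ ≤ NN := Nat.le_succ_of_le (le_max_right _ _)
        refine ⟨NN, fun m hm => ?_⟩
        have hmabs : (NN : ℤ) ≤ (m.natAbs : ℤ) := by
          rw [Int.abs_eq_natAbs] at hm; exact_mod_cast hm
        have hm0 : m ≠ 0 := by omega
        set vm : ℝ := (padicValNat p m.natAbs : ℝ) with hvmdef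
        have hvm0 : 0 ≤ vm := by positivity
        have hvmb : vm ≤ (t/2) * (m.natAbs : ℝ) := by
          apply hN₄; omega
        have hb3 : ∀ m'' : ℤ, (N₃:ℤ) ≤ |m''| →
            ((M - (m'':ℝ)*(t/2) : ℝ):EReal) ≤ v (f m'') :=
          fun m'' hcond => ereal_le_sub (hN₃ m'' hcond)
        have hb2 : ∀ m'' : ℤ, (N₂:ℤ) ≤ |m''| →
            ((M - (m'':ℝ)*(2*t) : ℝ):EReal) ≤ v (f m'') :=
          fun m'' hcond => ereal_le_sub (hN₂ m'' hcond)
        have hvhm : v (hh m) = ((-vm : ℝ) : EReal) + v (b (m - 1)) := by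
          show v (if m = 0 then 0 else ((m:L))⁻¹ * b (m - 1)) = _
          rw [if_neg hm0, hvmul, vinv_real v hv0 hv1 hvmul hvadd _ _ (hvint m hm0)]
        rw [hvhm]
        have hbound : ((M + vm - (m:ℝ)*t : ℝ) : EReal) ≤ v (b (m - 1)) := by
          apply hvb
          intro m' hm'
          have hm'le : (m':ℝ) ≤ (m:ℝ) - 1 := by exact_mod_cast (by omega : m' ≤ m - 1)
          rcases le_abs.mp hm with hP | hQ
          · -- m ≥ NN
            have hmpos : 0 < m := by omega
            have hamr : (m.natAbs : ℝ) = (m : ℝ) := by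
              rw [Nat.cast_natAbs]; exact_mod_cast abs_of_pos hmpos
            have hvmb' : vm ≤ (t/2) * (m:ℝ) := by rw [← hamr]; exact hvmb
            have hmge5 : 2*(M - B₀)/t ≤ (m:ℝ) := by
              calc 2*(M - B₀)/t ≤ (⌈2*(M-B₀)/t⌉₊ : ℝ) := Nat.le_ceil _
              _ ≤ (m:ℝ) := by exact_mod_cast (by omega : (⌈2*(M-B₀)/t⌉₊:ℤ) ≤ m)
            have hB0M : M - (t/2)*(m:ℝ) ≤ B₀ := by
              have h2 := mul_le_mul_of_nonneg_right hmge5 ht0.le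
              rw [div_mul_cancel₀ _ (ne_of_gt ht0)] at h2
              nlinarith
            rcases lt_or_ge m'.natAbs N₀ with hmid | hbig
            · have hmem : m' ∈ Finset.Icc (-(N₀:ℤ)) (N₀:ℤ) := by
                rw [Finset.mem_Icc]; omega
              refine le_trans (EReal.coe_le_coe_iff.mpr ?_) (hB₀ m' hmem)
              have hm1 : (1:ℝ) ≤ (m:ℝ) := by exact_mod_cast (by omega : (1:ℤ) ≤ m)
              nlinarith
            · rcases le_or_gt 0 m' with hm'pos | hm'neg
              · have habs' : (N₃:ℤ) ≤ |m'| := by rw [Int.abs_eq_natAbs]; omega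
                refine le_trans (EReal.coe_le_coe_iff.mpr ?_) (hb3 m' habs')
                have hm'0 : (0:ℝ) ≤ (m':ℝ) := by exact_mod_cast hm'pos
                nlinarith
              · have habs' : (N₂:ℤ) ≤ |m'| := by rw [Int.abs_eq_natAbs]; omega
                refine le_trans (EReal.coe_le_coe_iff.mpr ?_) (hb2 m' habs')
                have hm'0 : (m':ℝ) ≤ 0 := by exact_mod_cast (le_of_lt hm'neg)
                have hm1 : (1:ℝ) ≤ (m:ℝ) := by exact_mod_cast (by omega : (1:ℤ) ≤ m)
                nlinarith
          · -- m ≤ -NN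
            have hmneg : m < 0 := by omega
            have hamr : (m.natAbs : ℝ) = -(m : ℝ) := by
              rw [Nat.cast_natAbs]; exact_mod_cast abs_of_neg hmneg
            have hvmb' : vm ≤ (t/2) * (-(m:ℝ)) := by rw [← hamr]; exact hvmb
            have habs' : (N₂:ℤ) ≤ |m'| := by rw [Int.abs_eq_natAbs]; omega
            refine le_trans (EReal.coe_le_coe_iff.mpr ?_) (hb2 m' habs')
            have hmle : (m:ℝ) ≤ -1 := by exact_mod_cast (by omega : m ≤ -1)
            nlinarith
        exact ereal_add_bound hbound (by linarith)
      · -- IsDer gderInv hh f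
        intro n
        have hkey := key_lemma v hv0 hv1 hvmul hvadd gderInv gder hgdiO hgdO hconv'
          f (hftail f hf) b hb n
        refine hasVSum_congr v ?_ rfl hkey
        intro i
        show gderInv i * b (n - i) = gderInv i * (((n - i + 1 : ℤ):L) * hh (n - i + 1))
        rw [hch (n - (i:ℤ) + 1)]
        have he : n - (i:ℤ) + 1 - 1 = n - i := by ring
        rw [he]
  · -- PART 3
    intro ρ
    refine ⟨fun n => if n = -1 then ρ else 0, ⟨1, one_pos, ?_⟩, ?_⟩
    · intro t ht0 ht1 M
      refine ⟨2, fun n hn => ?_⟩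
      rw [Int.abs_eq_natAbs] at hn
      have hne : n ≠ -1 := by omega
      simp only [if_neg hne]
      rw [hv0, EReal.top_add_coe]
      exact le_top
    · intro M
      refine ⟨1, fun n hn => ?_⟩
      have hsum : ∑ i ∈ Finset.range n,
          gder i * (if (-1 - (i:ℤ)) = -1 then ρ else 0) = ρ := by
        have he : ∀ i ∈ Finset.range n,
            gder i * (if (-1 - (i:ℤ)) = -1 then ρ else 0) = if i = 0 then ρ else 0 := by
          intro i _
          by_cases hi : i = 0
          · subst hi; norm_num [hgd0]
          · have hne : ¬((-1 : ℤ) - (i:ℤ) = -1) := by omega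
            simp [hi, hne]
        rw [Finset.sum_congr rfl he, Finset.sum_ite_eq' (Finset.range n) 0 (fun _ => ρ),
          if_pos (Finset.mem_range.mpr hn)]
      show (M:EReal) ≤ v ((∑ i ∈ Finset.range n,
        gder i * (if (-1 - (i:ℤ)) = -1 then ρ else 0)) - ρ)
      rw [hsum, sub_self, hv0]
      exact le_top
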